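/- Let G = (V, E) be a finite simple undirected graph, let k ≥ 1, and let e = (u, v) be an anchor edge joining two non-adjacent vertices of G. If e has at least one follower, i.e. F({e}, G) = V(C_k(G + e)) \ V(C_k(G)) is nonempty, then u ∈ V(C_{k-1}(G)) and v ∈ V(C_{k-1}(G)), and moreover at least one of u and v lies in the (k-1)-shell H_{k-1}(G). -/
import Mathlib


open SimpleGraph

variable {V : Type*}

/-- The vertex set of the `k`-core of `G`: the largest set `S` such that every
vertex of `S` has at least `k` neighbors in `S` (realized as the union of all
such sets). -/
def coreSet (G : SimpleGraph V) (k : ℕ) : Set V :=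
  {u | ∃ S : Set V, u ∈ S ∧ ∀ v ∈ S, k ≤ (S ∩ G.neighborSet v).ncard}

/-- The followers of a set `A` of anchor edges: vertices of the `k`-core of `G + A`
that are not in the `k`-core of `G`. -/
def followers (G : SimpleGraph V) (k : ℕ) (A : Set (Sym2 V)) : Set V :=
  coreSet (G ⊔ SimpleGraph.fromEdgeSet A) k \ coreSet G k

lemma subset_coreSet (G : SimpleGraph V) (k : ℕ) {S : Set V}
    (hS : ∀ v ∈ S, k ≤ (S ∩ G.neighborSet v).ncard) : S ⊆ coreSet G k :=
  fun u hu => ⟨S, hu, hS⟩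

lemma coreSet_prop [Fintype V] (G : SimpleGraph V) (k : ℕ) :
    ∀ w ∈ coreSet G k, k ≤ (coreSet G k ∩ G.neighborSet w).ncard := by
  rintro w ⟨S, hwS, hS⟩
  have hsub : S ⊆ coreSet G k := subset_coreSet G k hS
  calc k ≤ (S ∩ G.neighborSet w).ncard := hS w hwS
    _ ≤ (coreSet G k ∩ G.neighborSet w).ncard :=
      Set.ncard_le_ncard (Set.inter_subset_inter_left _ hsub) (Set.toFinite _)

/-- If the anchor edge `e = (u, v)` joining two non-adjacent vertices of `G` has at
least one follower (w.r.t. the `k`-core, `k ≥ 1`), then `u` and `v` both belong to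
the `(k-1)`-core of `G`, and at least one of them lies in the `(k-1)`-shell
`H_{k-1}(G) = V(C_{k-1}(G)) \ V(C_k(G))`. -/
theorem stmt_0 [Fintype V] (G : SimpleGraph V) (k : ℕ) (hk : 1 ≤ k)
    (u v : V) (huv : u ≠ v) (hadj : ¬ G.Adj u v)
    (hfol : (followers G k {s(u, v)}).Nonempty) :
    u ∈ coreSet G (k - 1) ∧ v ∈ coreSet G (k - 1) ∧
      (u ∈ coreSet G (k - 1) \ coreSet G k ∨ v ∈ coreSet G (k - 1) \ coreSet G k) := by
  obtain ⟨w0, hw0S, hw0C⟩ := hfol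
  set G' := G ⊔ SimpleGraph.fromEdgeSet {s(u,v)} with hG'
  set S := coreSet G' k with hSdef
  have hadj' : ∀ a b, G'.Adj a b ↔ G.Adj a b ∨ ((a = u ∧ b = v) ∨ (a = v ∧ b = u)) := by
    intro a b
    rw [hG', SimpleGraph.sup_adj, SimpleGraph.fromEdgeSet_adj, Set.mem_singleton_iff,
      Sym2.eq_iff]
    constructor
    · rintro (h | ⟨h, hne⟩)
      · exact Or.inl h
      · exact Or.inr h
    · rintro (h | h)
      · exact Or.inl h
      · refine Or.inr ⟨h, ?_⟩
        rcases h with ⟨rfl, rfl⟩ | ⟨rfl, rfl⟩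
        · exact huv
        · exact huv.symm
  have hSprop : ∀ w ∈ S, k ≤ (S ∩ G'.neighborSet w).ncard := coreSet_prop G' k
  -- if w ∈ S avoids u and v, its G'-neighbors in S are G-neighbors
  have hker : ∀ w, w ≠ u → w ≠ v → S ∩ G'.neighborSet w = S ∩ G.neighborSet w := by
    intro w hwu hwv
    ext x
    simp only [Set.mem_inter_iff, SimpleGraph.mem_neighborSet, hadj']
    constructor
    · rintro ⟨hx, (h | ⟨⟨rfl, rfl⟩ | ⟨rfl, rfl⟩⟩)⟩
      · exact ⟨hx, h⟩
      · exact absurd rfl hwu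
      · exact absurd rfl hwv
    · rintro ⟨hx, h⟩
      exact ⟨hx, Or.inl h⟩
  -- Claim A: u ∈ S ∧ v ∈ S
  have hAB : u ∈ S ∧ v ∈ S := by
    by_contra hcon
    have hmiss : u ∉ S ∨ v ∉ S := by tauto
    have hsub : S ⊆ coreSet G k := by
      apply subset_coreSet
      intro w hw
      refine le_trans (hSprop w hw) (Set.ncard_le_ncard ?_ (Set.toFinite _))
      rintro x ⟨hxS, hxN⟩
      refine ⟨hxS, ?_⟩
      rw [SimpleGraph.mem_neighborSet, hadj'] at hxN
      rcases hxN with h | ⟨⟨rfl, rfl⟩ | ⟨rfl, rfl⟩⟩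
      · exact h
      · rcases hmiss with h' | h'
        · exact absurd hw h'
        · exact absurd hxS h'
      · rcases hmiss with h' | h'
        · exact absurd hxS h'
        · exact absurd hw h'
    exact hw0C (hsub hw0S)
  obtain ⟨huS, hvS⟩ := hAB
  -- Claim B: S ⊆ coreSet G (k-1)
  have hB : S ⊆ coreSet G (k - 1) := by
    apply subset_coreSet
    intro w hw
    by_cases hwu : w = u
    · subst hwu
      have hsub : S ∩ G'.neighborSet w ⊆ insert v (S ∩ G.neighborSet w) := by
        rintro x ⟨hxS, hxN⟩
        rw [SimpleGraph.mem_neighborSet, hadj'] at hxN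
        rcases hxN with h | ⟨⟨-, rfl⟩ | ⟨h1, -⟩⟩
        · exact Or.inr ⟨hxS, h⟩
        · exact Or.inl rfl
        · exact absurd h1 huv
      have h1 : k ≤ (insert v (S ∩ G.neighborSet w)).ncard :=
        le_trans (hSprop w hw) (Set.ncard_le_ncard hsub (Set.toFinite _))
      have h2 := Set.ncard_insert_le v (S ∩ G.neighborSet w)
      omega
    by_cases hwv : w = v
    · subst hwv
      have hsub : S ∩ G'.neighborSet w ⊆ insert u (S ∩ G.neighborSet w) := by
        rintro x ⟨hxS, hxN⟩
        rw [SimpleGraph.mem_neighborSet, hadj'] at hxN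
        rcases hxN with h | ⟨⟨h1, -⟩ | ⟨-, rfl⟩⟩
        · exact Or.inr ⟨hxS, h⟩
        · exact absurd h1 huv.symm
        · exact Or.inl rfl
      have h1 : k ≤ (insert u (S ∩ G.neighborSet w)).ncard :=
        le_trans (hSprop w hw) (Set.ncard_le_ncard hsub (Set.toFinite _))
      have h2 := Set.ncard_insert_le u (S ∩ G.neighborSet w)
      omega
    · have := hSprop w hw
      rw [hker w hwu hwv] at this
      omega
  -- Claim C: not both u and v in coreSet G k
  have hC : ¬ (u ∈ coreSet G k ∧ v ∈ coreSet G k) := by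
    rintro ⟨huC, hvC⟩
    have hT : S ∪ coreSet G k ⊆ coreSet G k := by
      apply subset_coreSet
      intro w hw
      by_cases hwC : w ∈ coreSet G k
      · refine le_trans (coreSet_prop G k w hwC) (Set.ncard_le_ncard ?_ (Set.toFinite _))
        exact Set.inter_subset_inter_left _ Set.subset_union_right
      · have hwS : w ∈ S := by
          rcases hw with h | h
          · exact h
          · exact absurd h hwC
        have hwu : w ≠ u := fun h => hwC (h ▸ huC)
        have hwv : w ≠ v := fun h => hwC (h ▸ hvC)
        have := hSprop w hwS
        rw [hker w hwu hwv] at this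
        refine le_trans this (Set.ncard_le_ncard ?_ (Set.toFinite _))
        exact Set.inter_subset_inter_left _ Set.subset_union_left
    exact hw0C (hT (Or.inl hw0S))
  refine ⟨hB huS, hB hvS, ?_⟩
  by_cases huC : u ∈ coreSet G k
  · exact Or.inr ⟨hB hvS, fun hvC => hC ⟨huC, hvC⟩⟩
  · exact Or.inl ⟨hB huS, huC⟩
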